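/- The MTL formula F_{=1} true (there exists a strictly later position whose data value is exactly one more than the current one) is not definable in TPTL^eq, the fragment of TPTL in which all register constraints are equalities x ∈ [0,0]. -/

import Mathlib

/-- Integers extended with `-∞` (`⊥`) and `+∞` (`⊤`), used as interval endpoints. -/
abbrev EIntX := WithBot (WithTop ℤ)

def EIntX.ofInt (n : ℤ) : EIntX := ((n : WithTop ℤ) : EIntX)

/-- An interval of integers, given by two (possibly infinite) endpoints and
openness flags. -/
structure Iv where
  lo : EIntX
  hi : EIntX
  loOpen : Bool
  hiOpen : Bool

/-- Membership of an integer in an interval. -/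
def Iv.mem (I : Iv) (d : ℤ) : Prop :=
  (if I.loOpen then I.lo < EIntX.ofInt d else I.lo ≤ EIntX.ofInt d) ∧
  (if I.hiOpen then EIntX.ofInt d < I.hi else EIntX.ofInt d ≤ I.hi)

/-- The interval `(-∞, +∞)`. -/
def Iv.univ : Iv := ⟨⊥, ⊤, true, true⟩

/-- The singleton interval `[n, n]`. -/
def Iv.pt (n : ℤ) : Iv := ⟨EIntX.ofInt n, EIntX.ofInt n, false, false⟩

/-- A data word: an infinite sequence of pairs of a set of propositions and a
natural number data value. -/
abbrev DataWord (P : Type) := ℕ → (Set P) × ℕ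

/-- Syntax of MTL: atoms, negation, conjunction, and interval-constrained
strict until. -/
inductive MTL (P : Type) where
  | atom : P → MTL P
  | neg  : MTL P → MTL P
  | and  : MTL P → MTL P → MTL P
  | untl : MTL P → Iv → MTL P → MTL P

/-- Satisfaction of an MTL formula at position `i` of data word `w`. -/
def MTL.sat {P : Type} (w : DataWord P) : ℕ → MTL P → Prop
  | i, .atom p => p ∈ (w i).1
  | i, .neg φ => ¬ MTL.sat w i φ
  | i, .and φ ψ => MTL.sat w i φ ∧ MTL.sat w i ψ
  | i, .untl φ I ψ => ∃ j, i < j ∧ MTL.sat w j ψ ∧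
      I.mem (((w j).2 : ℤ) - ((w i).2 : ℤ)) ∧
      ∀ k, i < k → k < j → MTL.sat w k φ

/-- A data word satisfies an MTL formula if it holds at position `0`. -/
def MTL.models {P : Type} (w : DataWord P) (φ : MTL P) : Prop := MTL.sat w 0 φ

/-- The until rank of an MTL formula. -/
def MTL.urk {P : Type} : MTL P → ℕ
  | .atom _ => 0
  | .neg φ => φ.urk
  | .and φ ψ => max φ.urk ψ.urk
  | .untl φ _ ψ => max φ.urk ψ.urk + 1

/-- All interval endpoints of until operators in the formula lie in `S`. -/
def MTL.endpointsIn {P : Type} : MTL P → Set EIntX → Prop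
  | .atom _, _ => True
  | .neg φ, S => φ.endpointsIn S
  | .and φ ψ, S => φ.endpointsIn S ∧ ψ.endpointsIn S
  | .untl φ I ψ, S => I.lo ∈ S ∧ I.hi ∈ S ∧ φ.endpointsIn S ∧ ψ.endpointsIn S

/-- Syntax of TPTL: atoms, register constraints, negation, conjunction,
strict until, and the freeze quantifier. -/
inductive TPTL (P V : Type) where
  | atom : P → TPTL P V
  | cstr : V → Iv → TPTL P V
  | neg : TPTL P V → TPTL P V
  | and : TPTL P V → TPTL P V → TPTL P V
  | untl : TPTL P V → TPTL P V → TPTL P V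
  | freeze : V → TPTL P V → TPTL P V

/-- Satisfaction of a TPTL formula at position `i` of data word `w` under the
register valuation `ν`. -/
def TPTL.sat {P V : Type} [DecidableEq V] (w : DataWord P) :
    ℕ → (V → ℕ) → TPTL P V → Prop
  | i, _, .atom p => p ∈ (w i).1
  | i, ν, .cstr x I => I.mem (((w i).2 : ℤ) - (ν x : ℤ))
  | i, ν, .neg φ => ¬ TPTL.sat w i ν φ
  | i, ν, .and φ ψ => TPTL.sat w i ν φ ∧ TPTL.sat w i ν ψ
  | i, ν, .untl φ ψ => ∃ j, i < j ∧ TPTL.sat w j ν ψ ∧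
      ∀ k, i < k → k < j → TPTL.sat w k ν φ
  | i, ν, .freeze x φ => TPTL.sat w i (Function.update ν x (w i).2) φ

/-- A data word satisfies a TPTL formula if it holds at position `0` under the
valuation mapping every register to the first data value. -/
def TPTL.models {P V : Type} [DecidableEq V] (w : DataWord P) (φ : TPTL P V) : Prop :=
  TPTL.sat w 0 (fun _ => (w 0).2) φ

/-- The until rank of a TPTL formula. -/
def TPTL.urk {P V : Type} : TPTL P V → ℕ
  | .atom _ => 0
  | .cstr _ _ => 0
  | .neg φ => φ.urk
  | .and φ ψ => max φ.urk ψ.urk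
  | .untl φ ψ => max φ.urk ψ.urk + 1
  | .freeze _ φ => φ.urk

/-- All register constraints in the formula are equality tests `x ∈ [0,0]`. -/
def TPTL.eqOnly {P V : Type} : TPTL P V → Prop
  | .atom _ => True
  | .cstr _ I => I = Iv.pt 0
  | .neg φ => φ.eqOnly
  | .and φ ψ => φ.eqOnly ∧ ψ.eqOnly
  | .untl φ ψ => φ.eqOnly ∧ ψ.eqOnly
  | .freeze _ φ => φ.eqOnly

/-- All endpoints of intervals in register constraints lie in `S`. -/
def TPTL.cstrIn {P V : Type} : TPTL P V → Set EIntX → Prop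
  | .atom _, _ => True
  | .cstr _ I, S => I.lo ∈ S ∧ I.hi ∈ S
  | .neg φ, S => φ.cstrIn S
  | .and φ ψ, S => φ.cstrIn S ∧ ψ.cstrIn S
  | .untl φ ψ, S => φ.cstrIn S ∧ ψ.cstrIn S
  | .freeze _ φ, S => φ.cstrIn S

/-- An MTL truth constant over `Bool`. -/
def mttB : MTL Bool := .neg (.and (.atom true) (.neg (.atom true)))

/-- The MTL formula `F_{=1} true`: some strictly later position has data value
exactly one more than the current one. -/
def Feq1 : MTL Bool := .untl mttB (Iv.pt 1) mttB


/-- Membership in a point interval is equality. -/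
lemma Iv.mem_pt (n d : ℤ) : (Iv.pt n).mem d ↔ d = n := by
  simp only [Iv.pt, Iv.mem, EIntX.ofInt, if_neg, if_pos, Bool.false_eq_true, if_false]
  constructor
  · rintro ⟨h1, h2⟩
    have h1' : n ≤ d := by exact_mod_cast h1
    have h2' : d ≤ n := by exact_mod_cast h2
    omega
  · rintro rfl; exact ⟨le_refl _, le_refl _⟩

/-- First distinguishing word: data values `0,1,1,1,…`. -/
def wA : DataWord Bool := fun i => (∅, if i = 0 then 0 else 1)

/-- Second distinguishing word: data values `0,2,2,2,…`. -/
def wB : DataWord Bool := fun i => (∅, if i = 0 then 0 else 2)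

/-- `eqOnly` formulas cannot distinguish `wA` from `wB` under related valuations. -/
lemma eqOnly_indist (φ : TPTL Bool ℕ) (h : φ.eqOnly) :
    ∀ (i : ℕ) (ν ν' : ℕ → ℕ),
      (∀ x, (ν x = 0 ∧ ν' x = 0) ∨ (ν x = 1 ∧ ν' x = 2)) →
      (TPTL.sat wA i ν φ ↔ TPTL.sat wB i ν' φ) := by
  induction φ with
  | atom p =>
    intro i ν ν' _
    simp [TPTL.sat, wA, wB]
  | cstr x I =>
    intro i ν ν' hrel
    have hI : I = Iv.pt 0 := h
    subst hI
    show (Iv.pt 0).mem _ ↔ (Iv.pt 0).mem _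
    rw [Iv.mem_pt, Iv.mem_pt]
    rcases hrel x with ⟨h1, h2⟩ | ⟨h1, h2⟩ <;>
      rcases Decidable.em (i = 0) with hi | hi <;>
      simp [wA, wB, h1, h2, hi]
  | neg φ ih =>
    intro i ν ν' hrel
    have := ih h i ν ν' hrel
    simp [TPTL.sat, this]
  | and φ ψ ihφ ihψ =>
    intro i ν ν' hrel
    have h1 := ihφ h.1 i ν ν' hrel
    have h2 := ihψ h.2 i ν ν' hrel
    simp [TPTL.sat, h1, h2]
  | untl φ ψ ihφ ihψ =>
    intro i ν ν' hrel
    show (∃ j, _) ↔ (∃ j, _)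
    constructor
    · rintro ⟨j, hij, hψ, hk⟩
      exact ⟨j, hij, (ihψ h.2 j ν ν' hrel).mp hψ,
        fun k h1 h2 => (ihφ h.1 k ν ν' hrel).mp (hk k h1 h2)⟩
    · rintro ⟨j, hij, hψ, hk⟩
      exact ⟨j, hij, (ihψ h.2 j ν ν' hrel).mpr hψ,
        fun k h1 h2 => (ihφ h.1 k ν ν' hrel).mpr (hk k h1 h2)⟩
  | freeze x φ ih =>
    intro i ν ν' hrel
    show TPTL.sat wA i (Function.update ν x (wA i).2) φ ↔
         TPTL.sat wB i (Function.update ν' x (wB i).2) φ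
    apply ih h
    intro y
    rcases Decidable.em (y = x) with hy | hy
    · subst hy
      simp only [Function.update_self]
      rcases Decidable.em (i = 0) with hi | hi <;> simp [wA, wB, hi]
    · simp only [Function.update_of_ne hy]
      exact hrel y

lemma mttB_sat (w : DataWord Bool) (i : ℕ) : MTL.sat w i mttB := by
  simp [mttB, MTL.sat]

/-- `F_{=1} true` is not definable in `TPTL^eq`, the fragment of TPTL where
all register constraints are equalities `x ∈ [0,0]`. -/
theorem Feq1_not_tptleq_definable :
    ¬ ∃ ψ : TPTL Bool ℕ, TPTL.eqOnly ψ ∧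
        ∀ w : DataWord Bool, TPTL.models w ψ ↔ MTL.models w Feq1 := by
  rintro ⟨ψ, heq, hdef⟩
  have hA : MTL.models wA Feq1 := by
    refine ⟨1, Nat.zero_lt_one, mttB_sat _ _, ?_, fun k h1 h2 => mttB_sat _ _⟩
    rw [Iv.mem_pt]
    simp [wA]
  have hB : ¬ MTL.models wB Feq1 := by
    rintro ⟨j, hj, _, hmem, _⟩
    rw [Iv.mem_pt] at hmem
    simp only [wB] at hmem
    rcases Decidable.em (j = 0) with h | h <;> simp [h] at hmem
  have hiff : TPTL.models wA ψ ↔ TPTL.models wB ψ := by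
    apply eqOnly_indist ψ heq 0
    intro x
    left
    constructor <;> simp [wA, wB]
  exact hB ((hdef wB).mp (hiff.mp ((hdef wA).mpr hA)))
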